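/- Let c, y₄, z₄ ∈ ℂ with c ≠ 0, c³ ≠ 1, c³ ≠ −8, and y₄ ≠ 0. Set X = [[c·z₄²/(2y₄), 0], [0, −c·z₄²/(2y₄)]], Y = [[−y₄, −(y₄³ − z₄³)/y₄], [1, y₄]], and Z = [[−z₄, −z₄·(8y₄³ + c³·z₄³)/(4y₄²)], [0, z₄]] in Mat₂(ℂ). Then (X, Y, Z) is a matrix solution for S(1,1,c), and it is irreducible if and only if z₄ ≠ 0. -/

import Mathlib

set_option maxHeartbeats 1000000

open Matrix

lemma units_top (A : Subalgebra ℂ (Matrix (Fin 2) (Fin 2) ℂ))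
    (h00 : (!![1,0;0,0] : Matrix (Fin 2) (Fin 2) ℂ) ∈ A)
    (h01 : (!![0,1;0,0] : Matrix (Fin 2) (Fin 2) ℂ) ∈ A)
    (h10 : (!![0,0;1,0] : Matrix (Fin 2) (Fin 2) ℂ) ∈ A) : A = ⊤ := by
  have h11 : (!![0,0;0,1] : Matrix (Fin 2) (Fin 2) ℂ) ∈ A := by
    have := A.mul_mem h10 h01
    have e : (!![0,0;1,0] : Matrix (Fin 2) (Fin 2) ℂ) * !![0,1;0,0] = !![0,0;0,1] := by
      ext i j; fin_cases i <;> fin_cases j <;> simp [Matrix.mul_apply, Fin.sum_univ_succ]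
    rwa [e] at this
  rw [eq_top_iff]
  intro m _
  have hm : m = m 0 0 • !![1,0;0,0] + m 0 1 • !![0,1;0,0] + m 1 0 • !![0,0;1,0]
      + m 1 1 • !![0,0;0,1] := by
    ext i j; fin_cases i <;> fin_cases j <;> simp
  rw [hm]
  exact add_mem (add_mem (add_mem (A.smul_mem h00 _) (A.smul_mem h01 _))
    (A.smul_mem h10 _)) (A.smul_mem h11 _)

lemma main_aux (c y₄ z₄ : ℂ) (hc0 : c ≠ 0) (hc1 : c ^ 3 ≠ 1) (hc8 : c ^ 3 ≠ -8) (hy : y₄ ≠ 0) :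
    ((!![-y₄, -((y₄ ^ 3 - z₄ ^ 3) / y₄); 1, y₄] : Matrix (Fin 2) (Fin 2) ℂ) *
        !![-z₄, -(z₄ * (8 * y₄ ^ 3 + c ^ 3 * z₄ ^ 3) / (4 * y₄ ^ 2)); 0, z₄] +
      !![-z₄, -(z₄ * (8 * y₄ ^ 3 + c ^ 3 * z₄ ^ 3) / (4 * y₄ ^ 2)); 0, z₄] *
        !![-y₄, -((y₄ ^ 3 - z₄ ^ 3) / y₄); 1, y₄] +
      c • (!![c * z₄ ^ 2 / (2 * y₄), 0; 0, -(c * z₄ ^ 2 / (2 * y₄))] *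
        !![c * z₄ ^ 2 / (2 * y₄), 0; 0, -(c * z₄ ^ 2 / (2 * y₄))]) = 0 ∧
     (!![-z₄, -(z₄ * (8 * y₄ ^ 3 + c ^ 3 * z₄ ^ 3) / (4 * y₄ ^ 2)); 0, z₄] : Matrix (Fin 2) (Fin 2) ℂ) *
        !![c * z₄ ^ 2 / (2 * y₄), 0; 0, -(c * z₄ ^ 2 / (2 * y₄))] +
      !![c * z₄ ^ 2 / (2 * y₄), 0; 0, -(c * z₄ ^ 2 / (2 * y₄))] *
        !![-z₄, -(z₄ * (8 * y₄ ^ 3 + c ^ 3 * z₄ ^ 3) / (4 * y₄ ^ 2)); 0, z₄] +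
      c • (!![-y₄, -((y₄ ^ 3 - z₄ ^ 3) / y₄); 1, y₄] *
        !![-y₄, -((y₄ ^ 3 - z₄ ^ 3) / y₄); 1, y₄]) = 0 ∧
     (!![c * z₄ ^ 2 / (2 * y₄), 0; 0, -(c * z₄ ^ 2 / (2 * y₄))] : Matrix (Fin 2) (Fin 2) ℂ) *
        !![-y₄, -((y₄ ^ 3 - z₄ ^ 3) / y₄); 1, y₄] +
      !![-y₄, -((y₄ ^ 3 - z₄ ^ 3) / y₄); 1, y₄] *
        !![c * z₄ ^ 2 / (2 * y₄), 0; 0, -(c * z₄ ^ 2 / (2 * y₄))] +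
      c • (!![-z₄, -(z₄ * (8 * y₄ ^ 3 + c ^ 3 * z₄ ^ 3) / (4 * y₄ ^ 2)); 0, z₄] *
        !![-z₄, -(z₄ * (8 * y₄ ^ 3 + c ^ 3 * z₄ ^ 3) / (4 * y₄ ^ 2)); 0, z₄]) = 0) ∧
    (Algebra.adjoin ℂ {(!![c * z₄ ^ 2 / (2 * y₄), 0; 0, -(c * z₄ ^ 2 / (2 * y₄))] : Matrix (Fin 2) (Fin 2) ℂ),
        !![-y₄, -((y₄ ^ 3 - z₄ ^ 3) / y₄); 1, y₄],
        !![-z₄, -(z₄ * (8 * y₄ ^ 3 + c ^ 3 * z₄ ^ 3) / (4 * y₄ ^ 2)); 0, z₄]} = ⊤ ↔ z₄ ≠ 0) := by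
  set X : Matrix (Fin 2) (Fin 2) ℂ := !![c * z₄ ^ 2 / (2 * y₄), 0; 0, -(c * z₄ ^ 2 / (2 * y₄))] with hX
  set Y : Matrix (Fin 2) (Fin 2) ℂ := !![-y₄, -((y₄ ^ 3 - z₄ ^ 3) / y₄); 1, y₄] with hYd
  set Z : Matrix (Fin 2) (Fin 2) ℂ := !![-z₄, -(z₄ * (8 * y₄ ^ 3 + c ^ 3 * z₄ ^ 3) / (4 * y₄ ^ 2)); 0, z₄] with hZd
  constructor
  · refine ⟨?_, ?_, ?_⟩ <;>
      · ext i j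
        fin_cases i <;> fin_cases j <;>
          simp [hX, hYd, hZd, Matrix.mul_apply, Fin.sum_univ_succ] <;>
          field_simp <;> ring
  constructor
  · -- adjoin = ⊤ → z₄ ≠ 0
    intro htop hz
    subst hz
    have hX0 : X = 0 := by ext i j; fin_cases i <;> fin_cases j <;> simp [hX]
    have hZ0 : Z = 0 := by ext i j; fin_cases i <;> fin_cases j <;> simp [hZd]
    have hcent : Algebra.adjoin ℂ {X, Y, Z} ≤ Subalgebra.centralizer ℂ {Y} := by
      apply Algebra.adjoin_le
      intro w hw
      rw [SetLike.mem_coe, Subalgebra.mem_centralizer_iff]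
      rcases hw with h | h | h
      · intro g hg; simp at hg; subst hg; rw [h, hX0]; simp
      · intro g hg; simp at hg; subst hg; rw [h]
      · intro g hg; simp at hg; subst hg; rw [h, hZ0]; simp
    rw [htop] at hcent
    have hE : (!![0,1;0,0] : Matrix (Fin 2) (Fin 2) ℂ) ∈ Subalgebra.centralizer ℂ {Y} :=
      hcent Algebra.mem_top
    rw [Subalgebra.mem_centralizer_iff] at hE
    have := hE Y (Set.mem_singleton Y)
    have h00 := congrFun (congrFun this 0) 0
    simp [hYd, Matrix.mul_apply, Fin.sum_univ_succ] at h00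
  · -- z₄ ≠ 0 → adjoin = ⊤
    intro hz
    set A := Algebra.adjoin ℂ ({X, Y, Z} : Set (Matrix (Fin 2) (Fin 2) ℂ)) with hA
    have hXA : X ∈ A := Algebra.subset_adjoin (by simp)
    have hYA : Y ∈ A := Algebra.subset_adjoin (by simp)
    have hZA : Z ∈ A := Algebra.subset_adjoin (by simp)
    set d := c * z₄ ^ 2 / (2 * y₄) with hd
    have hdne : d ≠ 0 := by
      rw [hd]; exact div_ne_zero (mul_ne_zero hc0 (pow_ne_zero 2 hz)) (mul_ne_zero two_ne_zero hy)
    have h00 : (!![1,0;0,0] : Matrix (Fin 2) (Fin 2) ℂ) ∈ A := by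
      have hmem : (2 * d)⁻¹ • (X + d • (1 : Matrix (Fin 2) (Fin 2) ℂ)) ∈ A :=
        A.smul_mem (A.add_mem hXA (A.smul_mem A.one_mem d)) _
      have he : (2 * d)⁻¹ • (X + d • (1 : Matrix (Fin 2) (Fin 2) ℂ)) = !![1,0;0,0] := by
        ext i j
        fin_cases i <;> fin_cases j <;>
          simp [hX, Matrix.one_apply] <;> field_simp <;> ring
      rwa [he] at hmem
    have h11 : (!![0,0;0,1] : Matrix (Fin 2) (Fin 2) ℂ) ∈ A := by
      have hmem : (1 : Matrix (Fin 2) (Fin 2) ℂ) - !![1,0;0,0] ∈ A := A.sub_mem A.one_mem h00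
      have he : (1 : Matrix (Fin 2) (Fin 2) ℂ) - !![1,0;0,0] = !![0,0;0,1] := by
        ext i j; fin_cases i <;> fin_cases j <;> simp [Matrix.one_apply]
      rwa [he] at hmem
    have h10 : (!![0,0;1,0] : Matrix (Fin 2) (Fin 2) ℂ) ∈ A := by
      have hmem : (!![0,0;0,1] : Matrix (Fin 2) (Fin 2) ℂ) * Y * !![1,0;0,0] ∈ A :=
        A.mul_mem (A.mul_mem h11 hYA) h00
      have he : (!![0,0;0,1] : Matrix (Fin 2) (Fin 2) ℂ) * Y * !![1,0;0,0] = !![0,0;1,0] := by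
        ext i j; fin_cases i <;> fin_cases j <;>
          simp [hYd, Matrix.mul_apply, Fin.sum_univ_succ]
      rwa [he] at hmem
    have h01 : (!![0,1;0,0] : Matrix (Fin 2) (Fin 2) ℂ) ∈ A := by
      by_cases hyz : y₄ ^ 3 - z₄ ^ 3 = 0
      · have hne : 8 * y₄ ^ 3 + c ^ 3 * z₄ ^ 3 ≠ 0 := by
          have hz3 : z₄ ^ 3 = y₄ ^ 3 := by linear_combination -hyz
          rw [hz3]
          intro h
          apply hc8
          have hy3 : y₄ ^ 3 ≠ 0 := pow_ne_zero 3 hy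
          have : (8 + c ^ 3) * y₄ ^ 3 = 0 := by ring_nf; linear_combination h
          rcases mul_eq_zero.mp this with h' | h'
          · linear_combination h'
          · exact absurd h' hy3
        have hmem : (-(4 * y₄ ^ 2) / (z₄ * (8 * y₄ ^ 3 + c ^ 3 * z₄ ^ 3))) •
            ((!![1,0;0,0] : Matrix (Fin 2) (Fin 2) ℂ) * Z * !![0,0;0,1]) ∈ A :=
          A.smul_mem (A.mul_mem (A.mul_mem h00 hZA) h11) _
        have he : (-(4 * y₄ ^ 2) / (z₄ * (8 * y₄ ^ 3 + c ^ 3 * z₄ ^ 3))) •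
            ((!![1,0;0,0] : Matrix (Fin 2) (Fin 2) ℂ) * Z * !![0,0;0,1]) = !![0,1;0,0] := by
          ext i j
          fin_cases i <;> fin_cases j <;>
            simp [hZd, Matrix.mul_apply, Fin.sum_univ_succ] <;>
            rw [neg_div, neg_mul, neg_neg, div_mul_div_comm, mul_comm (4 * y₄ ^ 2),
              div_self (mul_ne_zero (mul_ne_zero hz hne) (mul_ne_zero (by norm_num : (4:ℂ) ≠ 0) (pow_ne_zero 2 hy)))]
        rwa [he] at hmem
      · have hmem : (-(y₄) / (y₄ ^ 3 - z₄ ^ 3)) •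
            ((!![1,0;0,0] : Matrix (Fin 2) (Fin 2) ℂ) * Y * !![0,0;0,1]) ∈ A :=
          A.smul_mem (A.mul_mem (A.mul_mem h00 hYA) h11) _
        have he : (-(y₄) / (y₄ ^ 3 - z₄ ^ 3)) •
            ((!![1,0;0,0] : Matrix (Fin 2) (Fin 2) ℂ) * Y * !![0,0;0,1]) = !![0,1;0,0] := by
          ext i j
          fin_cases i <;> fin_cases j <;>
            simp [hYd, Matrix.mul_apply, Fin.sum_univ_succ] <;> field_simp <;> ring
        rwa [he] at hmem
    exact units_top A h00 h01 h10

/-- The first representative family of Table 4 (two-Jordan-block case,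
normalized with y₃ = 1): a matrix solution of S(1,1,c), irreducible iff z₄ ≠ 0. -/
theorem table4_family1_solution_irreducible_iff
    (c y₄ z₄ : ℂ) (hc0 : c ≠ 0) (hc1 : c ^ 3 ≠ 1) (hc8 : c ^ 3 ≠ -8) (hy : y₄ ≠ 0) :
    let X : Matrix (Fin 2) (Fin 2) ℂ :=
      !![c * z₄ ^ 2 / (2 * y₄), 0; 0, -(c * z₄ ^ 2 / (2 * y₄))]
    let Y : Matrix (Fin 2) (Fin 2) ℂ :=
      !![-y₄, -((y₄ ^ 3 - z₄ ^ 3) / y₄); 1, y₄]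
    let Z : Matrix (Fin 2) (Fin 2) ℂ :=
      !![-z₄, -(z₄ * (8 * y₄ ^ 3 + c ^ 3 * z₄ ^ 3) / (4 * y₄ ^ 2)); 0, z₄]
    (Y * Z + Z * Y + c • (X * X) = 0 ∧
     Z * X + X * Z + c • (Y * Y) = 0 ∧
     X * Y + Y * X + c • (Z * Z) = 0) ∧
    (Algebra.adjoin ℂ {X, Y, Z} = ⊤ ↔ z₄ ≠ 0) := by
  intro X Y Z
  exact main_aux c y₄ z₄ hc0 hc1 hc8 hy
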